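/- Let T ⊂ ℝ^d be a nonempty closed convex set containing the origin, and for x ∈ ℝ^d, σ > 0 define h_σ(x) = sup_{t ∈ T} { ⟨x,t⟩ − ‖t‖²/(2σ) }. Then for each fixed x, the map σ ↦ h_σ(x) is differentiable on (0,∞), with derivative (d/dσ) h_σ(x) = (1/2)‖Π_{T/σ}(x)‖², where Π_{T/σ} denotes the Euclidean metric projection onto the set T/σ. -/

import Mathlib

open MeasureTheory Metric Set
open scoped ENNReal NNReal Pointwise

noncomputable section

lemma varIneq {E : Type*} [NormedAddCommGroup E] [InnerProductSpace ℝ E]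
    {K : Set E} (hK : Convex ℝ K) {u v : E} (hv : v ∈ K)
    (hmin : ∀ t ∈ K, ‖u - v‖ ≤ ‖u - t‖) :
    ∀ w ∈ K, (inner ℝ (u - v) (w - v) : ℝ) ≤ 0 := by
  haveI : Nonempty K := ⟨⟨v, hv⟩⟩
  have hb : BddBelow (Set.range fun w : K => ‖u - w‖) := ⟨0, by rintro r ⟨w, rfl⟩; positivity⟩
  have h : ‖u - v‖ = ⨅ w : K, ‖u - w‖ :=
    le_antisymm (le_ciInf fun w => hmin w w.2) (ciInf_le hb ⟨v, hv⟩)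
  exact (norm_eq_iInf_iff_real_inner_le_zero hK hv).mp h

lemma projLip {E : Type*} [NormedAddCommGroup E] [InnerProductSpace ℝ E]
    {K : Set E} (hK : Convex ℝ K) {u₁ v₁ u₂ v₂ : E}
    (hv₁ : v₁ ∈ K) (hm₁ : ∀ t ∈ K, ‖u₁ - v₁‖ ≤ ‖u₁ - t‖)
    (hv₂ : v₂ ∈ K) (hm₂ : ∀ t ∈ K, ‖u₂ - v₂‖ ≤ ‖u₂ - t‖) :
    ‖v₁ - v₂‖ ≤ ‖u₁ - u₂‖ := by
  have h1 := varIneq hK hv₁ hm₁ v₂ hv₂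
  have h2 := varIneq hK hv₂ hm₂ v₁ hv₁
  have key : ‖v₁ - v₂‖ ^ 2 ≤ (inner ℝ (u₁ - u₂) (v₁ - v₂) : ℝ) := by
    have e : (inner ℝ (u₁ - u₂) (v₁ - v₂) : ℝ) - ‖v₁ - v₂‖ ^ 2 =
        -(inner ℝ (u₁ - v₁) (v₂ - v₁) : ℝ) - (inner ℝ (u₂ - v₂) (v₁ - v₂) : ℝ) := by
      rw [← real_inner_self_eq_norm_sq]
      simp only [inner_sub_left, inner_sub_right]
      ring
    linarith
  have cs := real_inner_le_norm (u₁ - u₂) (v₁ - v₂)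
  nlinarith [norm_nonneg (v₁ - v₂), norm_nonneg (u₁ - u₂)]

theorem statement2 {d : ℕ} (T : Set (EuclideanSpace ℝ (Fin d)))
    (hne : T.Nonempty) (hcl : IsClosed T) (hconv : Convex ℝ T)
    (h0 : (0 : EuclideanSpace ℝ (Fin d)) ∈ T)
    (proj : ℝ → EuclideanSpace ℝ (Fin d) → EuclideanSpace ℝ (Fin d))
    (hproj : ∀ σ : ℝ, 0 < σ → ∀ x, proj σ x ∈ σ⁻¹ • T ∧
      ∀ t ∈ σ⁻¹ • T, dist x (proj σ x) ≤ dist x t) :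
    ∀ x : EuclideanSpace ℝ (Fin d), ∀ σ : ℝ, 0 < σ →
      HasDerivAt
        (fun ν : ℝ => ⨆ t : T,
          ((inner ℝ x (t : EuclideanSpace ℝ (Fin d)) : ℝ) - ‖(t : EuclideanSpace ℝ (Fin d))‖ ^ 2 / (2 * ν)))
        ((1 / 2) * ‖proj σ x‖ ^ 2) σ := by
  intro x σ hσ
  haveI : Nonempty T := hne.to_subtype
  set P : ℝ → EuclideanSpace ℝ (Fin d) := fun ν => ν • proj ν x with hPdef
  -- P ν is the projection of ν • x onto T
  have hmemT : ∀ ν : ℝ, 0 < ν → P ν ∈ T := by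
    intro ν hν
    obtain ⟨t, ht, hts⟩ := (hproj ν hν x).1
    have : P ν = t := by
      rw [hPdef]; simp only; rw [← hts, smul_inv_smul₀ hν.ne']
    rwa [this]
  have hminT : ∀ ν : ℝ, 0 < ν → ∀ t ∈ T, ‖ν • x - P ν‖ ≤ ‖ν • x - t‖ := by
    intro ν hν t ht
    have hmem' : ν⁻¹ • t ∈ ν⁻¹ • T := smul_mem_smul_set ht
    have h := (hproj ν hν x).2 _ hmem'
    rw [dist_eq_norm, dist_eq_norm] at h
    have h1 : ν • x - P ν = ν • (x - proj ν x) := by rw [hPdef]; simp only; rw [smul_sub]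
    have h2 : ν • x - t = ν • (x - ν⁻¹ • t) := by rw [smul_sub, smul_inv_smul₀ hν.ne']
    rw [h1, h2, norm_smul, norm_smul]
    exact mul_le_mul_of_nonneg_left h (norm_nonneg _)
  set g : ℝ → ℝ := fun ν => ‖ν • x - P ν‖ ^ 2 with hgdef
  set L : ℝ := 2 * (inner ℝ (σ • x - P σ) x : ℝ) with hLdef
  -- expansion helper
  have expand : ∀ (ν : ℝ) (q : EuclideanSpace ℝ (Fin d)),
      ‖ν • x - q‖ ^ 2 = ‖σ • x - q‖ ^ 2 + 2 * (ν - σ) * (inner ℝ (σ • x - q) x : ℝ)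
        + (ν - σ) ^ 2 * ‖x‖ ^ 2 := by
    intro ν q
    have h : ν • x - q = (σ • x - q) + (ν - σ) • x := by module
    rw [h, norm_add_sq_real, real_inner_smul_right, norm_smul, Real.norm_eq_abs, mul_pow, sq_abs]
    ring
  -- squared minimality
  have hminsq : ∀ ν : ℝ, 0 < ν → ∀ t ∈ T, ‖ν • x - P ν‖ ^ 2 ≤ ‖ν • x - t‖ ^ 2 := by
    intro ν hν t ht
    exact pow_le_pow_left₀ (norm_nonneg _) (hminT ν hν t ht) 2
  -- error bound
  have hbound : ∀ ν : ℝ, 0 < ν → |g ν - g σ - (ν - σ) * L| ≤ 2 * ‖x‖ ^ 2 * (ν - σ) ^ 2 := by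
    intro ν hν
    have hub : g ν - g σ - (ν - σ) * L ≤ ‖x‖ ^ 2 * (ν - σ) ^ 2 := by
      have h1 : g ν ≤ ‖ν • x - P σ‖ ^ 2 := hminsq ν hν (P σ) (hmemT σ hσ)
      have h2 := expand ν (P σ)
      have h3 : g σ = ‖σ • x - P σ‖ ^ 2 := rfl
      rw [hLdef]; nlinarith
    have hlb : -(2 * ‖x‖ ^ 2 * (ν - σ) ^ 2) ≤ g ν - g σ - (ν - σ) * L := by
      have h1 : g σ ≤ ‖σ • x - P ν‖ ^ 2 := hminsq σ hσ (P ν) (hmemT ν hν)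
      have h2 := expand ν (P ν)
      have h3 : g ν = ‖ν • x - P ν‖ ^ 2 := rfl
      have hdiff : 2 * (ν - σ) * (inner ℝ (σ • x - P ν) x : ℝ)
          - 2 * (ν - σ) * (inner ℝ (σ • x - P σ) x : ℝ)
          = 2 * (ν - σ) * (inner ℝ (P σ - P ν) x : ℝ) := by
        simp only [inner_sub_left]; ring
      have hne2 : ‖P σ - P ν‖ ≤ |σ - ν| * ‖x‖ := by
        have := projLip hconv (hmemT σ hσ) (hminT σ hσ) (hmemT ν hν) (hminT ν hν)
        have he : σ • x - ν • x = (σ - ν) • x := by module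
        rwa [he, norm_smul, Real.norm_eq_abs] at this
      have hcs : |(inner ℝ (P σ - P ν) x : ℝ)| ≤ |σ - ν| * ‖x‖ * ‖x‖ :=
        le_trans (abs_real_inner_le_norm _ _)
          (mul_le_mul_of_nonneg_right hne2 (norm_nonneg _))
      have habs : |ν - σ| = |σ - ν| := abs_sub_comm ν σ
      have habs2 : |2 * (ν - σ) * (inner ℝ (P σ - P ν) x : ℝ)| ≤ 2 * ‖x‖ ^ 2 * (ν - σ) ^ 2 := by
        rw [abs_mul, abs_mul, abs_two]
        calc 2 * |ν - σ| * |(inner ℝ (P σ - P ν) x : ℝ)|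
            ≤ 2 * |ν - σ| * (|σ - ν| * ‖x‖ * ‖x‖) := by
              apply mul_le_mul_of_nonneg_left hcs (by positivity)
          _ = 2 * ‖x‖ ^ 2 * (ν - σ) ^ 2 := by
              rw [← habs, ← sq_abs (ν - σ)]; ring
      have h4 := (abs_le.mp habs2).1
      have h5 : (0:ℝ) ≤ ‖x‖ ^ 2 * (ν - σ) ^ 2 := by positivity
      rw [hLdef]
      nlinarith [hdiff, h4, h5, h1, h2, h3]
    rw [abs_le]
    have h5 : (0:ℝ) ≤ ‖x‖ ^ 2 * (ν - σ) ^ 2 := by positivity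
    exact ⟨hlb, by linarith⟩
  -- derivative of g at σ
  have hg : HasDerivAt g L σ := by
    rw [hasDerivAt_iff_isLittleO]
    have hO : (fun ν => g ν - g σ - (ν - σ) • L) =O[nhds σ] (fun ν => (ν - σ) ^ 2) := by
      rw [Asymptotics.isBigO_iff]
      refine ⟨2 * ‖x‖ ^ 2, ?_⟩
      filter_upwards [Ioi_mem_nhds hσ] with ν hν
      have heq : |(ν - σ) ^ 2| = (ν - σ) ^ 2 := abs_of_nonneg (sq_nonneg _)
      rw [Real.norm_eq_abs, Real.norm_eq_abs, smul_eq_mul, heq]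
      calc |g ν - g σ - (ν - σ) * L| ≤ 2 * ‖x‖ ^ 2 * (ν - σ) ^ 2 := hbound ν hν
        _ = 2 * ‖x‖ ^ 2 * (ν - σ) ^ 2 := rfl
    have h1 : (fun ν : ℝ => ν - σ) =o[nhds σ] (fun _ : ℝ => (1 : ℝ)) := by
      rw [Asymptotics.isLittleO_one_iff]
      simpa using ((continuous_sub_right σ).tendsto σ)
    have h2 := h1.mul_isBigO (Asymptotics.isBigO_refl (fun ν : ℝ => ν - σ) (nhds σ))
    simp only [one_mul] at h2
    refine hO.trans_isLittleO ?_
    have he : (fun ν : ℝ => (ν - σ) ^ 2) = fun ν => (ν - σ) * (ν - σ) := by ext ν; ring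
    rw [he]
    exact h2
  -- derivative of the closed form
  have h2ν : HasDerivAt (fun ν : ℝ => 2 * ν) 2 σ := by
    simpa using (hasDerivAt_id σ).const_mul (2 : ℝ)
  have hdiv := hg.div h2ν (by positivity)
  have hlin : HasDerivAt (fun ν : ℝ => ν * (‖x‖ ^ 2 / 2)) (‖x‖ ^ 2 / 2) σ := by
    simpa using (hasDerivAt_id σ).mul_const (‖x‖ ^ 2 / 2)
  have hF := hlin.sub hdiv
  -- the sup equals the closed form for ν > 0
  have hsup : ∀ ν : ℝ, 0 < ν →
      (⨆ t : T, ((inner ℝ x (t : EuclideanSpace ℝ (Fin d)) : ℝ)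
          - ‖(t : EuclideanSpace ℝ (Fin d))‖ ^ 2 / (2 * ν)))
        = ν * (‖x‖ ^ 2 / 2) - g ν / (2 * ν) := by
    intro ν hν
    have key : ∀ t ∈ T, (inner ℝ x t : ℝ) - ‖t‖ ^ 2 / (2 * ν)
        ≤ (inner ℝ x (P ν) : ℝ) - ‖P ν‖ ^ 2 / (2 * ν) := by
      intro t ht
      have hsq := hminsq ν hν t ht
      rw [norm_sub_sq_real, norm_sub_sq_real, real_inner_smul_left, real_inner_smul_left] at hsq
      have hmul : 2 * ν * (inner ℝ x t : ℝ) - ‖t‖ ^ 2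
          ≤ 2 * ν * (inner ℝ x (P ν) : ℝ) - ‖P ν‖ ^ 2 := by linarith
      have hν2 : (2 * ν : ℝ) ≠ 0 := by positivity
      have e1 : (2 * ν * (inner ℝ x t : ℝ) - ‖t‖ ^ 2) / (2 * ν)
          = (inner ℝ x t : ℝ) - ‖t‖ ^ 2 / (2 * ν) := by
        rw [sub_div, mul_div_cancel_left₀ _ hν2]
      have e2 : (2 * ν * (inner ℝ x (P ν) : ℝ) - ‖P ν‖ ^ 2) / (2 * ν)
          = (inner ℝ x (P ν) : ℝ) - ‖P ν‖ ^ 2 / (2 * ν) := by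
        rw [sub_div, mul_div_cancel_left₀ _ hν2]
      rw [← e1, ← e2]
      have h2p : (0:ℝ) < 2 * ν := by linarith
      exact (div_le_div_iff_of_pos_right h2p).mpr hmul
    have hb : BddAbove (Set.range fun t : T =>
        (inner ℝ x (t : EuclideanSpace ℝ (Fin d)) : ℝ)
          - ‖(t : EuclideanSpace ℝ (Fin d))‖ ^ 2 / (2 * ν)) := by
      refine ⟨(inner ℝ x (P ν) : ℝ) - ‖P ν‖ ^ 2 / (2 * ν), ?_⟩
      rintro r ⟨t, rfl⟩
      exact key t t.2
    have heq : (⨆ t : T, ((inner ℝ x (t : EuclideanSpace ℝ (Fin d)) : ℝ)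
          - ‖(t : EuclideanSpace ℝ (Fin d))‖ ^ 2 / (2 * ν)))
        = (inner ℝ x (P ν) : ℝ) - ‖P ν‖ ^ 2 / (2 * ν) :=
      le_antisymm (ciSup_le fun t => key t t.2)
        (le_ciSup hb (⟨P ν, hmemT ν hν⟩ : T))
    rw [heq]
    have h3 : g ν = ‖ν • x - P ν‖ ^ 2 := rfl
    have hexp : g ν = ν ^ 2 * ‖x‖ ^ 2 - 2 * ν * (inner ℝ x (P ν) : ℝ) + ‖P ν‖ ^ 2 := by
      rw [h3, norm_sub_sq_real, real_inner_smul_left, norm_smul, Real.norm_eq_abs, mul_pow, sq_abs]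
      ring
    rw [hexp]
    field_simp
    ring
  -- transfer
  have hev : (fun ν : ℝ => ⨆ t : T,
        ((inner ℝ x (t : EuclideanSpace ℝ (Fin d)) : ℝ)
          - ‖(t : EuclideanSpace ℝ (Fin d))‖ ^ 2 / (2 * ν)))
      =ᶠ[nhds σ] (fun ν => ν * (‖x‖ ^ 2 / 2) - g ν / (2 * ν)) := by
    filter_upwards [Ioi_mem_nhds hσ] with ν hν
    exact hsup ν hν
  have hS := hF.congr_of_eventuallyEq hev
  convert hS using 1
  case e'_4 => rfl
  case e'_5 => rfl
  -- value of the derivative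
  have h3 : g σ = ‖σ • x - P σ‖ ^ 2 := rfl
  have hgσ : g σ = σ ^ 2 * ‖x‖ ^ 2 - 2 * σ * (inner ℝ x (P σ) : ℝ) + ‖P σ‖ ^ 2 := by
    rw [h3, norm_sub_sq_real, real_inner_smul_left, norm_smul, Real.norm_eq_abs, mul_pow, sq_abs]
    ring
  have hPs : P σ = σ • proj σ x := rfl
  have hL : L = 2 * σ * ‖x‖ ^ 2 - 2 * σ * (inner ℝ x (proj σ x) : ℝ) := by
    rw [hLdef, hPs, inner_sub_left, real_inner_smul_left, real_inner_smul_left,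
      real_inner_self_eq_norm_sq, real_inner_comm (proj σ x) x]
    ring
  have hPσ : ‖P σ‖ ^ 2 = σ ^ 2 * ‖proj σ x‖ ^ 2 := by
    rw [hPs, norm_smul, Real.norm_eq_abs, mul_pow, sq_abs]
  have hiP : (inner ℝ x (P σ) : ℝ) = σ * (inner ℝ x (proj σ x) : ℝ) := by
    rw [hPs, real_inner_smul_right]
  rw [hgσ, hL, hPσ, hiP]
  field_simp
  ring
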